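/- Let K be a field of characteristic zero and σ : I → J a surjective map of finite nonempty sets. Define a K-linear map σ_* : K[t_i : i∈I] → K[t_j : j∈J] on the divided monomial basis by σ_*(t^{[ν]}) = t^{[σ_*(ν+1)−1]}, where t^{[ν]} = (∏_i t_i^{ν_i})/(∏_i ν_i!) and (σ_*μ)(j) = ∑_{σ(i)=j} μ(i) for μ : I → ℕ. Then: (a) σ_*((∑_{i∈I} t_i)·f) = (∑_{j∈J} t_j)·σ_*(f) for all f, so σ_* descends to a map P_I → P_J of the quotient rings P_I = K[t_i]/(1−∑_i t_i); and (b) ∫_J σ_*(f) = ∫_I f for all f ∈ K[t_i : i∈I]. -/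

import Mathlib

open MvPolynomial Finset

/-- The linear functional `∫_I` on `K[t_i : i ∈ I]` determined on monomials by
`∫_I t^{[ν]} = 1 / (n + |ν|)!`. -/
noncomputable def simplexIntegral (K : Type*) [Field K] [CharZero K] {I : Type*}
    [Fintype I] (n : ℕ) (f : MvPolynomial I K) : K :=
  ∑ ν ∈ f.support, f.coeff ν *
    (((∏ i, Nat.factorial (ν i) : ℕ) : K) /
      ((Nat.factorial (n + ∑ i, ν i) : ℕ) : K))

/-- For `σ : I → J` and a multi-index `ν : I → ℕ`, the multi-index
`σ_*(ν + 1) - 1 : J → ℕ`, i.e. `j ↦ (∑_{σ i = j} (ν i + 1)) - 1`. -/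
noncomputable def pushExp {I J : Type*} [Fintype I] [DecidableEq J] [Finite J]
    (σ : I → J) (ν : I →₀ ℕ) : J →₀ ℕ :=
  Finsupp.equivFunOnFinite.symm fun j =>
    (∑ i ∈ Finset.univ.filter fun i => σ i = j, (ν i + 1)) - 1

/-- The `K`-linear map `σ_* : K[t_i : i ∈ I] → K[t_j : j ∈ J]` defined on the divided
monomial basis by `σ_*(t^{[ν]}) = t^{[σ_*(ν+1)−1]}`. -/
noncomputable def sigmaLower (K : Type*) [Field K] [CharZero K] {I J : Type*}
    [Fintype I] [Fintype J] [DecidableEq J] (σ : I → J)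
    (f : MvPolynomial I K) : MvPolynomial J K :=
  ∑ ν ∈ f.support,
    (f.coeff ν * (((∏ i, Nat.factorial (ν i) : ℕ) : K) /
        ((∏ j, Nat.factorial (pushExp σ ν j) : ℕ) : K))) •
      MvPolynomial.monomial (pushExp σ ν) (1 : K)

/- ### Auxiliary material -/

/-- The scaling factor `∏ ν_i! / ∏ (pushExp σ ν)_j!` as an element of `K`. -/
noncomputable def cfac (K : Type*) [Field K] [CharZero K] {I J : Type*}
    [Fintype I] [Fintype J] [DecidableEq J] (σ : I → J) (ν : I →₀ ℕ) : K :=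
  ((∏ i, Nat.factorial (ν i) : ℕ) : K) /
    ((∏ j, Nat.factorial (pushExp σ ν j) : ℕ) : K)

lemma prodFact_add_single {α : Type*} [Fintype α] [DecidableEq α] (μ : α →₀ ℕ) (a : α) :
    (∏ x, Nat.factorial ((μ + Finsupp.single a 1 : α →₀ ℕ) x)) =
      (μ a + 1) * ∏ x, Nat.factorial (μ x) := by
  rw [← Finset.mul_prod_erase univ
      (fun x => Nat.factorial ((μ + Finsupp.single a 1 : α →₀ ℕ) x)) (mem_univ a),
    ← Finset.mul_prod_erase univ (fun x => Nat.factorial (μ x)) (mem_univ a)]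
  have h1 : (μ + Finsupp.single a 1 : α →₀ ℕ) a = μ a + 1 := by
    rw [Finsupp.add_apply, Finsupp.single_eq_same]
  have h2 : ∏ x ∈ univ.erase a, Nat.factorial ((μ + Finsupp.single a 1 : α →₀ ℕ) x)
      = ∏ x ∈ univ.erase a, Nat.factorial (μ x) := by
    refine Finset.prod_congr rfl fun x hx => ?_
    have hxa : x ≠ a := (Finset.mem_erase.mp hx).1
    rw [Finsupp.add_apply, Finsupp.single_apply, if_neg (Ne.symm hxa), add_zero]
  rw [h1, h2, Nat.factorial_succ, mul_assoc]

section Main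

variable {K : Type*} [Field K] [CharZero K] {I J : Type*}
  [Fintype I] [Fintype J] [DecidableEq J]

lemma pushExp_apply (σ : I → J) (ν : I →₀ ℕ) (j : J) :
    pushExp σ ν j = (∑ i ∈ Finset.univ.filter fun i => σ i = j, (ν i + 1)) - 1 := rfl

lemma pushExp_succ {σ : I → J} (hσ : Function.Surjective σ) (ν : I →₀ ℕ) (j : J) :
    pushExp σ ν j + 1 = ∑ i ∈ Finset.univ.filter fun i => σ i = j, (ν i + 1) := by
  obtain ⟨i0, hi0⟩ := hσ j
  have hmem : i0 ∈ Finset.univ.filter fun i => σ i = j := by simp [hi0]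
  have h1 : 1 ≤ ∑ i ∈ Finset.univ.filter fun i => σ i = j, (ν i + 1) :=
    le_trans (Nat.le_add_left 1 (ν i0))
      (Finset.single_le_sum (f := fun i => ν i + 1) (fun _ _ => Nat.zero_le _) hmem)
  rw [pushExp_apply]
  omega

lemma pushExp_add_single (σ : I → J) (ν : I →₀ ℕ) (i : I) :
    pushExp σ (ν + Finsupp.single i 1) = pushExp σ ν + Finsupp.single (σ i) 1 := by
  classical
  ext j
  rw [Finsupp.add_apply, Finsupp.single_apply, pushExp_apply, pushExp_apply]
  have hsum : ∑ i' ∈ Finset.univ.filter (fun i' => σ i' = j),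
        ((ν + Finsupp.single i 1 : I →₀ ℕ) i' + 1)
      = (∑ i' ∈ Finset.univ.filter (fun i' => σ i' = j), (ν i' + 1))
        + (if σ i = j then 1 else 0) := by
    have : ∀ i' : I, (ν + Finsupp.single i 1 : I →₀ ℕ) i' + 1
        = (ν i' + 1) + (if i = i' then 1 else 0) := by
      intro i'; rw [Finsupp.add_apply, Finsupp.single_apply]; split <;> omega
    rw [Finset.sum_congr rfl fun i' _ => this i', Finset.sum_add_distrib,
      Finset.sum_ite_eq]
    simp
  rw [hsum]
  rcases eq_or_ne (σ i) j with h | h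
  · have hmem : i ∈ Finset.univ.filter fun i' => σ i' = j := by simp [h]
    have h1 : 1 ≤ ∑ i' ∈ Finset.univ.filter fun i' => σ i' = j, (ν i' + 1) :=
      le_trans (Nat.le_add_left 1 (ν i))
        (Finset.single_le_sum (f := fun i' => ν i' + 1) (fun _ _ => Nat.zero_le _) hmem)
    omega
  · simp only [if_neg h]
    omega

lemma sum_pushExp {σ : I → J} (hσ : Function.Surjective σ) (ν : I →₀ ℕ) :
    (∑ j, pushExp σ ν j) + Fintype.card J = (∑ i, ν i) + Fintype.card I := by
  have h : ∑ j, (pushExp σ ν j + 1) = ∑ i, (ν i + 1) := by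
    rw [← Finset.sum_fiberwise univ σ (fun i => ν i + 1)]
    exact Finset.sum_congr rfl fun j _ => pushExp_succ hσ ν j
  simpa [Finset.sum_add_distrib, Finset.card_univ] using h

lemma sigmaLower_eq (σ : I → J) (f : MvPolynomial I K) :
    sigmaLower K σ f =
      (AddMonoidAlgebra.coeff f).sum fun ν a => (a * cfac K σ ν) • MvPolynomial.monomial (pushExp σ ν) (1 : K) := rfl

lemma sigmaLower_add (σ : I → J) (f g : MvPolynomial I K) :
    sigmaLower K σ (f + g) = sigmaLower K σ f + sigmaLower K σ g := by
  rw [sigmaLower_eq, sigmaLower_eq, sigmaLower_eq, AddMonoidAlgebra.coeff_add]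
  exact Finsupp.sum_add_index' (fun ν => by simp) (fun ν a b => by rw [add_mul, add_smul])

lemma sigmaLower_monomial (σ : I → J) (ν : I →₀ ℕ) (a : K) :
    sigmaLower K σ (MvPolynomial.monomial ν a)
      = (a * cfac K σ ν) • MvPolynomial.monomial (pushExp σ ν) (1 : K) := by
  classical
  rcases eq_or_ne a 0 with h | h
  · simp [sigmaLower, h]
  · rw [sigmaLower, MvPolynomial.support_monomial, if_neg h, Finset.sum_singleton,
      MvPolynomial.coeff_monomial, if_pos rfl, cfac]

lemma sigmaLower_fsum {A : Type*} (σ : I → J) (s : Finset A) (g : A → MvPolynomial I K) :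
    sigmaLower K σ (∑ x ∈ s, g x) = ∑ x ∈ s, sigmaLower K σ (g x) := by
  classical
  induction s using Finset.induction with
  | empty => simp [sigmaLower]
  | insert _ _ h ih => rw [Finset.sum_insert h, sigmaLower_add, ih, Finset.sum_insert h]

lemma simplexIntegral_add (n : ℕ) (f g : MvPolynomial I K) :
    simplexIntegral K n (f + g) = simplexIntegral K n f + simplexIntegral K n g := by
  have hrfl : ∀ h : MvPolynomial I K, simplexIntegral K n h
      = (AddMonoidAlgebra.coeff h).sum fun ν a => a * (((∏ i, Nat.factorial (ν i) : ℕ) : K) /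
        ((Nat.factorial (n + ∑ i, ν i) : ℕ) : K)) := fun _ => rfl
  rw [hrfl, hrfl, hrfl, AddMonoidAlgebra.coeff_add]
  exact Finsupp.sum_add_index' (fun ν => by simp) (fun ν a b => by rw [add_mul])

lemma simplexIntegral_monomial (n : ℕ) (ν : I →₀ ℕ) (a : K) :
    simplexIntegral K n (MvPolynomial.monomial ν a)
      = a * (((∏ i, Nat.factorial (ν i) : ℕ) : K) /
        ((Nat.factorial (n + ∑ i, ν i) : ℕ) : K)) := by
  classical
  rcases eq_or_ne a 0 with h | h
  · simp [simplexIntegral, h]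
  · rw [simplexIntegral, MvPolynomial.support_monomial, if_neg h, Finset.sum_singleton,
      MvPolynomial.coeff_monomial, if_pos rfl]

lemma simplexIntegral_fsum {A : Type*} (n : ℕ) (s : Finset A) (g : A → MvPolynomial I K) :
    simplexIntegral K n (∑ x ∈ s, g x) = ∑ x ∈ s, simplexIntegral K n (g x) := by
  classical
  induction s using Finset.induction with
  | empty => simp [simplexIntegral]
  | insert _ _ h ih => rw [Finset.sum_insert h, simplexIntegral_add, ih, Finset.sum_insert h]

set_option linter.unusedSectionVars false in
lemma X_mul_mono (j : J) (μ : J →₀ ℕ) (c : K) :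
    (MvPolynomial.X j : MvPolynomial J K) * MvPolynomial.monomial μ c
      = MvPolynomial.monomial (μ + Finsupp.single j 1) c := by
  rw [MvPolynomial.monomial_add_single, pow_one, mul_comm]

lemma cfac_add_single {σ : I → J} (ν : I →₀ ℕ) (i : I) :
    cfac K σ (ν + Finsupp.single i 1)
      = cfac K σ ν * (((ν i + 1 : ℕ) : K) / ((pushExp σ ν (σ i) + 1 : ℕ) : K)) := by
  classical
  have hD : ((∏ j, Nat.factorial (pushExp σ ν j) : ℕ) : K) ≠ 0 :=
    Nat.cast_ne_zero.mpr (Finset.prod_ne_zero_iff.mpr fun j _ => (Nat.factorial_pos _).ne')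
  have hp : ((pushExp σ ν (σ i) + 1 : ℕ) : K) ≠ 0 :=
    Nat.cast_ne_zero.mpr (Nat.succ_ne_zero _)
  rw [cfac, cfac, prodFact_add_single ν i, pushExp_add_single σ ν i,
    prodFact_add_single (pushExp σ ν) (σ i)]
  push_cast
  field_simp

lemma key_a {σ : I → J} (hσ : Function.Surjective σ) (ν : I →₀ ℕ) (a : K) :
    sigmaLower K σ ((∑ i, MvPolynomial.X i) * MvPolynomial.monomial ν a)
      = (∑ j, MvPolynomial.X j) * sigmaLower K σ (MvPolynomial.monomial ν a) := by
  have hS : (∑ i, (MvPolynomial.X i : MvPolynomial I K)) * MvPolynomial.monomial ν a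
      = ∑ i, MvPolynomial.monomial (ν + Finsupp.single i 1) a := by
    rw [Finset.sum_mul]
    exact Finset.sum_congr rfl fun i _ => by
      rw [MvPolynomial.monomial_add_single, pow_one, mul_comm]
  rw [hS, sigmaLower_fsum, sigmaLower_monomial]
  have hRHS : (∑ j, (MvPolynomial.X j : MvPolynomial J K)) *
        ((a * cfac K σ ν) • MvPolynomial.monomial (pushExp σ ν) (1 : K))
      = ∑ j, MvPolynomial.monomial (pushExp σ ν + Finsupp.single j 1) (a * cfac K σ ν) := by
    rw [MvPolynomial.smul_monomial, smul_eq_mul, mul_one, Finset.sum_mul]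
    exact Finset.sum_congr rfl fun j _ => X_mul_mono j _ _
  rw [hRHS]
  rw [← Finset.sum_fiberwise univ σ
    (fun i => sigmaLower K σ (MvPolynomial.monomial (ν + Finsupp.single i 1) a))]
  refine Finset.sum_congr rfl fun j _ => ?_
  have hterm : ∀ i ∈ Finset.univ.filter fun i => σ i = j,
      sigmaLower K σ (MvPolynomial.monomial (ν + Finsupp.single i 1) a)
        = (a * cfac K σ ν * (((ν i + 1 : ℕ) : K) / ((pushExp σ ν j + 1 : ℕ) : K))) •
            MvPolynomial.monomial (pushExp σ ν + Finsupp.single j 1) (1 : K) := by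
    intro i hi
    have hij : σ i = j := by simpa using hi
    rw [sigmaLower_monomial, cfac_add_single, pushExp_add_single, hij, mul_assoc]
  rw [Finset.sum_congr rfl hterm, ← Finset.sum_smul]
  have hp : ((pushExp σ ν j + 1 : ℕ) : K) ≠ 0 := Nat.cast_ne_zero.mpr (Nat.succ_ne_zero _)
  have hsum : (∑ i ∈ Finset.univ.filter fun i => σ i = j,
      a * cfac K σ ν * (((ν i + 1 : ℕ) : K) / ((pushExp σ ν j + 1 : ℕ) : K)))
      = a * cfac K σ ν := by
    rw [← Finset.mul_sum, ← Finset.sum_div]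
    rw [show (∑ i ∈ Finset.univ.filter fun i => σ i = j, ((ν i + 1 : ℕ) : K))
        = ((pushExp σ ν j + 1 : ℕ) : K) by
      rw [← Nat.cast_sum, ← pushExp_succ hσ]]
    rw [div_self hp, mul_one]
  rw [hsum, MvPolynomial.smul_monomial, smul_eq_mul, mul_one]

lemma key_b {σ : I → J} (hσ : Function.Surjective σ) [Nonempty I] [Nonempty J]
    (ν : I →₀ ℕ) (a : K) :
    simplexIntegral K (Fintype.card J - 1) (sigmaLower K σ (MvPolynomial.monomial ν a))
      = simplexIntegral K (Fintype.card I - 1) (MvPolynomial.monomial ν a) := by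
  have hD : ((∏ j, Nat.factorial (pushExp σ ν j) : ℕ) : K) ≠ 0 :=
    Nat.cast_ne_zero.mpr (Finset.prod_ne_zero_iff.mpr fun j _ => (Nat.factorial_pos _).ne')
  have hexp : Fintype.card J - 1 + ∑ j, pushExp σ ν j
      = Fintype.card I - 1 + ∑ i, ν i := by
    have h := sum_pushExp hσ ν
    have hI : 1 ≤ Fintype.card I := Fintype.card_pos
    have hJ : 1 ≤ Fintype.card J := Fintype.card_pos
    omega
  rw [sigmaLower_monomial, MvPolynomial.smul_monomial, smul_eq_mul, mul_one,
    simplexIntegral_monomial, simplexIntegral_monomial, hexp, cfac,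
    mul_assoc, div_mul_div_comm,
    mul_comm ((∏ i, Nat.factorial (ν i) : ℕ) : K)
      ((∏ j, Nat.factorial (pushExp σ ν j) : ℕ) : K),
    mul_div_mul_left _ _ hD]

end Main

/-- (a) `σ_*((∑ t_i) · f) = (∑ t_j) · σ_*(f)`, so `σ_*` descends to `P_I → P_J`;
(b) `∫_J σ_*(f) = ∫_I f`. -/
theorem sigmaLower_spec (K : Type*) [Field K] [CharZero K] (I J : Type*)
    [Fintype I] [Fintype J] [DecidableEq J] [Nonempty I] [Nonempty J]
    (σ : I → J) (hσ : Function.Surjective σ) :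
    (∀ f : MvPolynomial I K,
        sigmaLower K σ ((∑ i, MvPolynomial.X i) * f) =
          (∑ j, MvPolynomial.X j) * sigmaLower K σ f) ∧
    (∀ f : MvPolynomial I K,
        simplexIntegral K (Fintype.card J - 1) (sigmaLower K σ f) =
          simplexIntegral K (Fintype.card I - 1) f) := by
  constructor
  · intro f
    calc sigmaLower K σ ((∑ i, MvPolynomial.X i) * f)
        = sigmaLower K σ (∑ v ∈ f.support,
            (∑ i, MvPolynomial.X i) * MvPolynomial.monomial v (MvPolynomial.coeff v f)) := by
          rw [← Finset.mul_sum, ← MvPolynomial.as_sum]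
      _ = ∑ v ∈ f.support, sigmaLower K σ
            ((∑ i, MvPolynomial.X i) * MvPolynomial.monomial v (MvPolynomial.coeff v f)) :=
          sigmaLower_fsum σ _ _
      _ = ∑ v ∈ f.support, (∑ j, MvPolynomial.X j) *
            sigmaLower K σ (MvPolynomial.monomial v (MvPolynomial.coeff v f)) :=
          Finset.sum_congr rfl fun v _ => key_a hσ v _
      _ = (∑ j, MvPolynomial.X j) * sigmaLower K σ f := by
          rw [← Finset.mul_sum, ← sigmaLower_fsum, ← MvPolynomial.as_sum]
  · intro f
    calc simplexIntegral K (Fintype.card J - 1) (sigmaLower K σ f)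
        = simplexIntegral K (Fintype.card J - 1) (sigmaLower K σ
            (∑ v ∈ f.support, MvPolynomial.monomial v (MvPolynomial.coeff v f))) := by
          rw [← MvPolynomial.as_sum]
      _ = ∑ v ∈ f.support, simplexIntegral K (Fintype.card J - 1)
            (sigmaLower K σ (MvPolynomial.monomial v (MvPolynomial.coeff v f))) := by
          rw [sigmaLower_fsum, simplexIntegral_fsum]
      _ = ∑ v ∈ f.support, simplexIntegral K (Fintype.card I - 1)
            (MvPolynomial.monomial v (MvPolynomial.coeff v f)) :=
          Finset.sum_congr rfl fun v _ => key_b hσ v _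
      _ = simplexIntegral K (Fintype.card I - 1) f := by
          rw [← simplexIntegral_fsum, ← MvPolynomial.as_sum]
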